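/- arXiv:2510.00359 — 2 statements merged into one kernel-verified Lean document; each statement's English description precedes it below -/
import Mathlib

section
/- Let A be a symmetric positive definite m×m matrix with eigenvalues in [λ₋, λ₊], and let J be an m×m matrix with ⟨ψ, Jᵀψ⟩ ≥ (1−γ)‖ψ‖² for all ψ and ‖Jᵀ‖ ≤ 1+γ, where γ ∈ (0,1). Then for every ψ ∈ ℝ^m, ⟨ψ, Jᵀ A ψ⟩ ≥ [((λ₊+λ₋)/2)(1−γ) − ((1+γ)/2)(λ₊−λ₋)]·‖ψ‖² = (λ₋ − γλ₊)‖ψ‖². -/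
open scoped Matrix RealInnerProductSpace

/-- The spectral (operator) norm of a real matrix. -/
noncomputable def matOpNorm {p q : ℕ} (A : Matrix (Fin p) (Fin q) ℝ) : ℝ :=
  ‖LinearMap.toContinuousLinearMap (Matrix.toEuclideanLin A)‖

-- key lemma: for Hermitian A, ‖Aψ - c•ψ‖ ≤ r‖ψ‖ if |eig - c| ≤ r
lemma spec_shift_bound {m : ℕ} {A : Matrix (Fin m) (Fin m) ℝ} (hA : A.IsHermitian)
    (c r : ℝ) (hr : 0 ≤ r) (h : ∀ i, |hA.eigenvalues i - c| ≤ r)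
    (ψ : EuclideanSpace ℝ (Fin m)) :
    ‖Matrix.toEuclideanLin A ψ - c • ψ‖ ≤ r * ‖ψ‖ := by
  set e := hA.eigenvectorBasis
  have hsym := (Matrix.isHermitian_iff_isSymmetric).1 hA
  have hrepr : ∀ i, e.repr (Matrix.toEuclideanLin A ψ - c • ψ) i
      = (hA.eigenvalues i - c) * e.repr ψ i := by
    intro i
    rw [map_sub, map_smul]
    simp only [PiLp.sub_apply, PiLp.smul_apply, smul_eq_mul]
    have h1 : e.repr (Matrix.toEuclideanLin A ψ) i = hA.eigenvalues i * e.repr ψ i := by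
      rw [OrthonormalBasis.repr_apply_apply, OrthonormalBasis.repr_apply_apply,
        ← hsym (e i) ψ]
      have : Matrix.toEuclideanLin A (e i) = hA.eigenvalues i • (e i) := by
        apply (WithLp.equiv 2 _).injective
        ext j
        have := congrFun (hA.mulVec_eigenvectorBasis i) j
        simpa [Matrix.toEuclideanLin_apply] using this
      rw [this, inner_smul_left]
      simp
    rw [h1]; ring
  have hn1 : ‖Matrix.toEuclideanLin A ψ - c • ψ‖ = ‖e.repr (Matrix.toEuclideanLin A ψ - c • ψ)‖ :=
    (e.repr.norm_map _).symm
  have hn2 : ‖ψ‖ = ‖e.repr ψ‖ := (e.repr.norm_map _).symm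
  rw [hn1, hn2]
  have hsq : ‖e.repr (Matrix.toEuclideanLin A ψ - c • ψ)‖ ^ 2 ≤ (r * ‖e.repr ψ‖) ^ 2 := by
    rw [EuclideanSpace.norm_eq, EuclideanSpace.norm_eq, Real.sq_sqrt (by positivity),
      mul_pow, Real.sq_sqrt (by positivity), Finset.mul_sum]
    apply Finset.sum_le_sum
    intro i _
    rw [hrepr i]
    have := h i
    have : (hA.eigenvalues i - c) ^ 2 ≤ r ^ 2 := by
      have := sq_abs (hA.eigenvalues i - c) ▸ pow_le_pow_left₀ (abs_nonneg _) (h i) 2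
      simpa using this
    calc ‖(hA.eigenvalues i - c) * e.repr ψ i‖ ^ 2
        = (hA.eigenvalues i - c) ^ 2 * (e.repr ψ i) ^ 2 := by
          rw [Real.norm_eq_abs, sq_abs]; ring
      _ ≤ r ^ 2 * ‖e.repr ψ i‖ ^ 2 := by
          rw [Real.norm_eq_abs, sq_abs]
          exact mul_le_mul_of_nonneg_right this (sq_nonneg _)
  nlinarith [hsq, norm_nonneg (e.repr (Matrix.toEuclideanLin A ψ - c • ψ)),
    mul_nonneg hr (norm_nonneg (e.repr ψ))]

/-- Let `A` be symmetric positive definite with eigenvalues in `[λ₋, λ₊]`, and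
let `J` satisfy `⟨ψ, Jᵀψ⟩ ≥ (1−γ)‖ψ‖²` for all `ψ` and `‖Jᵀ‖ ≤ 1+γ` with `γ ∈ (0,1)`.
Then `⟨ψ, Jᵀ A ψ⟩ ≥ [((λ₊+λ₋)/2)(1−γ) − ((1+γ)/2)(λ₊−λ₋)]·‖ψ‖² = (λ₋ − γλ₊)‖ψ‖²`. -/
theorem stmt8 {m : ℕ} (A J : Matrix (Fin m) (Fin m) ℝ) (hA : A.PosDef)
    (lamMinus lamPlus : ℝ)
    (hlam : ∀ i, lamMinus ≤ hA.1.eigenvalues i ∧ hA.1.eigenvalues i ≤ lamPlus)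
    (γ : ℝ) (hγ0 : 0 < γ) (hγ1 : γ < 1)
    (hcoer : ∀ ψ : EuclideanSpace ℝ (Fin m),
      (1 - γ) * ‖ψ‖ ^ 2 ≤ ⟪ψ, Matrix.toEuclideanLin Jᵀ ψ⟫)
    (hnorm : matOpNorm Jᵀ ≤ 1 + γ) :
    ∀ ψ : EuclideanSpace ℝ (Fin m),
      (((lamPlus + lamMinus) / 2) * (1 - γ) - ((1 + γ) / 2) * (lamPlus - lamMinus)) * ‖ψ‖ ^ 2
        ≤ ⟪ψ, Matrix.toEuclideanLin (Jᵀ * A) ψ⟫ ∧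
      ((lamPlus + lamMinus) / 2) * (1 - γ) - ((1 + γ) / 2) * (lamPlus - lamMinus)
        = lamMinus - γ * lamPlus := by
  intro ψ
  refine ⟨?_, by ring⟩
  rcases Nat.eq_zero_or_pos m with hm | hm
  · subst hm
    have hψ : ψ = 0 := Subsingleton.elim ψ 0
    simp [hψ]
  · set μ : ℝ := max lamMinus 0 with hμdef
    set c : ℝ := (lamPlus + μ) / 2 with hcdef
    set r : ℝ := (lamPlus - μ) / 2 with hrdef
    have hpos : ∀ i, 0 < hA.1.eigenvalues i := fun i => hA.eigenvalues_pos i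
    have hμle : ∀ i, μ ≤ hA.1.eigenvalues i := fun i => max_le (hlam i).1 (hpos i).le
    have i0 : Fin m := ⟨0, hm⟩
    have hμp : μ ≤ lamPlus := le_trans (hμle i0) (hlam i0).2
    have hμ0 : 0 ≤ μ := le_max_right _ _
    have hr0 : 0 ≤ r := by rw [hrdef]; linarith
    have hc0 : 0 ≤ c := by rw [hcdef]; linarith
    have habs : ∀ i, |hA.1.eigenvalues i - c| ≤ r := fun i =>
      abs_le.2 ⟨by have := hμle i; rw [hrdef, hcdef] at *; linarith,
        by have := (hlam i).2; rw [hrdef, hcdef] at *; linarith⟩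
    have hB := spec_shift_bound hA.1 c r hr0 habs ψ
    set w : EuclideanSpace ℝ (Fin m) := Matrix.toEuclideanLin A ψ - c • ψ with hwdef
    have hdecomp : Matrix.toEuclideanLin (Jᵀ * A) ψ
        = c • Matrix.toEuclideanLin Jᵀ ψ + Matrix.toEuclideanLin Jᵀ w := by
      have h1 : Matrix.toEuclideanLin (Jᵀ * A) ψ
          = Matrix.toEuclideanLin Jᵀ (Matrix.toEuclideanLin A ψ) := by
        apply (WithLp.equiv 2 _).injective
        simp [Matrix.toEuclideanLin_apply, Matrix.mulVec_mulVec]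
      rw [h1]
      have h2 : Matrix.toEuclideanLin A ψ = c • ψ + w := by rw [hwdef]; abel
      rw [h2, map_add, map_smul]
    have hJw : ‖Matrix.toEuclideanLin Jᵀ w‖ ≤ (1 + γ) * ‖w‖ := by
      have h := (LinearMap.toContinuousLinearMap (Matrix.toEuclideanLin Jᵀ)).le_opNorm w
      simp only [LinearMap.coe_toContinuousLinearMap'] at h
      calc ‖Matrix.toEuclideanLin Jᵀ w‖ ≤ matOpNorm Jᵀ * ‖w‖ := h
        _ ≤ (1 + γ) * ‖w‖ := mul_le_mul_of_nonneg_right hnorm (norm_nonneg _)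
    have hinner : |⟪ψ, Matrix.toEuclideanLin Jᵀ w⟫| ≤ ‖ψ‖ * ‖Matrix.toEuclideanLin Jᵀ w‖ :=
      abs_real_inner_le_norm _ _
    have hcoerψ := hcoer ψ
    rw [hdecomp, inner_add_right, real_inner_smul_right]
    have h3 : ‖ψ‖ * ‖Matrix.toEuclideanLin Jᵀ w‖ ≤ (1 + γ) * (r * ‖ψ‖ ^ 2) := by
      have h4 : ‖Matrix.toEuclideanLin Jᵀ w‖ ≤ (1 + γ) * (r * ‖ψ‖) :=
        le_trans hJw (mul_le_mul_of_nonneg_left hB (by linarith))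
      nlinarith [norm_nonneg ψ, norm_nonneg (Matrix.toEuclideanLin Jᵀ w)]
    have h5 : -((1 + γ) * (r * ‖ψ‖ ^ 2)) ≤ ⟪ψ, Matrix.toEuclideanLin Jᵀ w⟫ := by
      have := neg_abs_le ⟪ψ, Matrix.toEuclideanLin Jᵀ w⟫
      linarith
    have h6 : c * ((1 - γ) * ‖ψ‖ ^ 2) ≤ c * ⟪ψ, Matrix.toEuclideanLin Jᵀ ψ⟫ :=
      mul_le_mul_of_nonneg_left hcoerψ hc0
    have hμlam : lamMinus ≤ μ := le_max_left _ _
    have hkey : (((lamPlus + lamMinus) / 2) * (1 - γ) - ((1 + γ) / 2) * (lamPlus - lamMinus))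
        * ‖ψ‖ ^ 2 ≤ c * ((1 - γ) * ‖ψ‖ ^ 2) - (1 + γ) * (r * ‖ψ‖ ^ 2) := by
      rw [hcdef, hrdef]
      nlinarith [sq_nonneg ‖ψ‖, hγ0]
    linarith
end

section
/- Let M ∈ ℝ^{p×m} have singular values in [√(γ/β), 1/√β], let J = I − DS with ‖DS‖_op ≤ γ ∈ (0,1), and let h ∈ ℝ^m with ‖h‖ ≥ η > 0. Define v = Mᵀ J⁻ᵀ h and w = Mᵀ h. Then ⟨v, w⟩ ≥ ‖M v‖²·(λ₋ − γλ₊), where λ₋ and λ₊ are lower and upper bounds on the eigenvalues of (M Mᵀ)⁻¹; in particular if λ₋ − γλ₊ > 0 then ⟨v, w⟩ ≥ (γη/(β(1+γ)))²·(λ₋ − γλ₊) > 0. -/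
open scoped Matrix

/-- The Euclidean norm of a vector in `ℝ^k`. -/
noncomputable def vecNorm {k : ℕ} (x : Fin k → ℝ) : ℝ := Real.sqrt (x ⬝ᵥ x)

/-- Smallest singular value: square root of the smallest eigenvalue of `M * Mᴴ`. -/
noncomputable def sigmaMin {p q : ℕ} (M : Matrix (Fin p) (Fin q) ℝ) : ℝ :=
  Real.sqrt (⨅ i, (Matrix.isHermitian_mul_conjTranspose_self M).eigenvalues i)

/-- Largest singular value: square root of the largest eigenvalue of `M * Mᴴ`. -/
noncomputable def sigmaMax {p q : ℕ} (M : Matrix (Fin p) (Fin q) ℝ) : ℝ :=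
  Real.sqrt (⨆ i, (Matrix.isHermitian_mul_conjTranspose_self M).eigenvalues i)

section Aux

open Matrix

noncomputable def toE {k : ℕ} (x : Fin k → ℝ) : EuclideanSpace ℝ (Fin k) :=
  (WithLp.equiv 2 (Fin k → ℝ)).symm x

lemma dot_self_nonneg' {k : ℕ} (x : Fin k → ℝ) : 0 ≤ x ⬝ᵥ x :=
  Finset.sum_nonneg fun _ _ => mul_self_nonneg _

lemma vecNorm_sq {k : ℕ} (x : Fin k → ℝ) : vecNorm x ^ 2 = x ⬝ᵥ x :=
  Real.sq_sqrt (dot_self_nonneg' x)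

lemma vecNorm_nonneg {k : ℕ} (x : Fin k → ℝ) : 0 ≤ vecNorm x := Real.sqrt_nonneg _

lemma dot_self_pos {k : ℕ} {x : Fin k → ℝ} (hx : x ≠ 0) : 0 < x ⬝ᵥ x := by
  obtain ⟨i, hi⟩ := Function.ne_iff.mp hx
  exact Finset.sum_pos' (fun j _ => mul_self_nonneg _)
    ⟨i, Finset.mem_univ i, mul_self_pos.mpr hi⟩

lemma vecNorm_pos {k : ℕ} {x : Fin k → ℝ} (hx : x ≠ 0) : 0 < vecNorm x :=
  Real.sqrt_pos.mpr (dot_self_pos hx)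

lemma vecNorm_eq {k : ℕ} (x : Fin k → ℝ) : vecNorm x = ‖toE x‖ := by
  rw [EuclideanSpace.norm_eq]
  unfold vecNorm dotProduct
  congr 1
  exact Finset.sum_congr rfl fun i _ => by
    simp [toE, Real.norm_eq_abs, sq, abs_mul_abs_self]

lemma dot_eq_inner {k : ℕ} (x y : Fin k → ℝ) : x ⬝ᵥ y = @inner ℝ _ _ (toE x) (toE y) := by
  simp [toE, PiLp.inner_apply, RCLike.inner_apply, dotProduct, mul_comm]

lemma dot_le_norm {k : ℕ} (x y : Fin k → ℝ) : x ⬝ᵥ y ≤ vecNorm x * vecNorm y := by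
  rw [dot_eq_inner, vecNorm_eq, vecNorm_eq]
  exact real_inner_le_norm _ _

lemma vecNorm_sub_le {k : ℕ} (x y : Fin k → ℝ) :
    vecNorm (x - y) ≤ vecNorm x + vecNorm y := by
  rw [vecNorm_eq, vecNorm_eq, vecNorm_eq]
  have : toE (x - y) = toE x - toE y := rfl
  rw [this]; exact norm_sub_le _ _

lemma opNorm_bound {p q : ℕ} (A : Matrix (Fin p) (Fin q) ℝ) (x : Fin q → ℝ) :
    vecNorm (A *ᵥ x) ≤ matOpNorm A * vecNorm x := by
  rw [vecNorm_eq, vecNorm_eq]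
  have h := (LinearMap.toContinuousLinearMap (Matrix.toEuclideanLin A)).le_opNorm (toE x)
  simpa [toE, matOpNorm] using h

lemma mulVecT_dot {a b : ℕ} (C : Matrix (Fin a) (Fin b) ℝ) (x : Fin b → ℝ) (y : Fin a → ℝ) :
    (C *ᵥ x) ⬝ᵥ y = x ⬝ᵥ (Cᵀ *ᵥ y) := by
  rw [Matrix.dotProduct_mulVec, Matrix.vecMul_transpose]

lemma spectral_decomp {n : ℕ} {B : Matrix (Fin n) (Fin n) ℝ} (hB : B.IsHermitian)
    (x : Fin n → ℝ) :
    ∃ y : Fin n → ℝ, x ⬝ᵥ x = ∑ i, y i * y i ∧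
      x ⬝ᵥ (B *ᵥ x) = ∑ i, hB.eigenvalues i * (y i * y i) ∧
      (B *ᵥ x) ⬝ᵥ (B *ᵥ x) = ∑ i, hB.eigenvalues i ^ 2 * (y i * y i) := by
  set U : Matrix (Fin n) (Fin n) ℝ := (hB.eigenvectorUnitary : Matrix (Fin n) (Fin n) ℝ) with hUdef
  have hsU : star U = Uᵀ := Matrix.conjTranspose_eq_transpose_of_trivial U
  have h1 : Uᵀ * U = 1 := by rw [← hsU]; exact Unitary.coe_star_mul_self hB.eigenvectorUnitary
  have h2 : U * Uᵀ = 1 := by rw [← hsU]; exact Unitary.coe_mul_star_self hB.eigenvectorUnitary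
  set y : Fin n → ℝ := Uᵀ *ᵥ x with hydef
  have hiso : ∀ a b : Fin n → ℝ, (U *ᵥ a) ⬝ᵥ (U *ᵥ b) = a ⬝ᵥ b := by
    intro a b
    rw [mulVecT_dot U a (U *ᵥ b), Matrix.mulVec_mulVec, h1, Matrix.one_mulVec]
  have hx : x = U *ᵥ y := by rw [hydef, Matrix.mulVec_mulVec, h2, Matrix.one_mulVec]
  have hBdec : B = U * Matrix.diagonal hB.eigenvalues * Uᵀ := by
    have := hB.spectral_theorem
    rw [Unitary.conjStarAlgAut_apply, ← hUdef, hsU] at this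
    exact this
  have hBx : B *ᵥ x = U *ᵥ (fun i => hB.eigenvalues i * y i) := by
    conv_lhs => rw [hBdec]
    rw [← Matrix.mulVec_mulVec, ← Matrix.mulVec_mulVec, ← hydef]
    have hd : Matrix.diagonal hB.eigenvalues *ᵥ y = fun i => hB.eigenvalues i * y i := by
      funext i; exact Matrix.mulVec_diagonal hB.eigenvalues y i
    rw [hd]
  refine ⟨y, ?_, ?_, ?_⟩
  · rw [hx, hiso]; rfl
  · rw [hBx]
    conv_lhs => rw [hx]
    rw [hiso]
    exact Finset.sum_congr rfl fun i _ => by ring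
  · rw [hBx, hiso]
    exact Finset.sum_congr rfl fun i _ => by ring

lemma quad_lower {n : ℕ} {B : Matrix (Fin n) (Fin n) ℝ} (hB : B.IsHermitian) (a : ℝ)
    (ha : ∀ i, a ≤ hB.eigenvalues i) (x : Fin n → ℝ) :
    a * (x ⬝ᵥ x) ≤ x ⬝ᵥ (B *ᵥ x) := by
  obtain ⟨y, h1, h2, _⟩ := spectral_decomp hB x
  rw [h1, h2, Finset.mul_sum]
  exact Finset.sum_le_sum fun i _ =>
    mul_le_mul_of_nonneg_right (ha i) (mul_self_nonneg _)

lemma normsq_upper {n : ℕ} {B : Matrix (Fin n) (Fin n) ℝ} (hB : B.IsHermitian) (b : ℝ)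
    (hb : ∀ i, |hB.eigenvalues i| ≤ b) (x : Fin n → ℝ) :
    (B *ᵥ x) ⬝ᵥ (B *ᵥ x) ≤ b ^ 2 * (x ⬝ᵥ x) := by
  obtain ⟨y, h1, _, h3⟩ := spectral_decomp hB x
  rw [h1, h3, Finset.mul_sum]
  refine Finset.sum_le_sum fun i _ => mul_le_mul_of_nonneg_right ?_ (mul_self_nonneg _)
  calc hB.eigenvalues i ^ 2 = |hB.eigenvalues i| ^ 2 := (sq_abs _).symm
  _ ≤ b ^ 2 := pow_le_pow_left₀ (abs_nonneg _) (hb i) 2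

lemma normsq_lower {n : ℕ} {B : Matrix (Fin n) (Fin n) ℝ} (hB : B.IsHermitian) (a : ℝ)
    (ha0 : 0 ≤ a) (ha : ∀ i, a ≤ hB.eigenvalues i) (x : Fin n → ℝ) :
    a ^ 2 * (x ⬝ᵥ x) ≤ (B *ᵥ x) ⬝ᵥ (B *ᵥ x) := by
  obtain ⟨y, h1, _, h3⟩ := spectral_decomp hB x
  rw [h1, h3, Finset.mul_sum]
  exact Finset.sum_le_sum fun i _ =>
    mul_le_mul_of_nonneg_right (pow_le_pow_left₀ ha0 (ha i) 2) (mul_self_nonneg _)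

end Aux


set_option maxHeartbeats 1000000 in
/-- Let `M` have singular values in `[√(γ/β), 1/√β]`, `J = I − DS` with
`‖DS‖_op ≤ γ ∈ (0,1)`, and `‖h‖ ≥ η > 0`. With `v = Mᵀ J⁻ᵀ h` and `w = Mᵀ h`, we have
`⟨v, w⟩ ≥ ‖M v‖²·(λ₋ − γλ₊)` where `λ₋`, `λ₊` bound the eigenvalues of `(M Mᵀ)⁻¹` from
below and above; in particular if `λ₋ − γλ₊ > 0` then
`⟨v, w⟩ ≥ (γη/(β(1+γ)))²·(λ₋ − γλ₊) > 0`. -/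
theorem stmt12 {p m : ℕ} (M : Matrix (Fin p) (Fin m) ℝ) (hrank : M.rank = p)
    (β γ η : ℝ) (hβ : 0 < β) (hγ0 : 0 < γ) (hγ1 : γ < 1) (hη : 0 < η)
    (hσmin : Real.sqrt (γ / β) ≤ sigmaMin M) (hσmax : sigmaMax M ≤ 1 / Real.sqrt β)
    (DS : Matrix (Fin p) (Fin p) ℝ) (hDS : matOpNorm DS ≤ γ)
    (J : Matrix (Fin p) (Fin p) ℝ) (hJ : J = 1 - DS)
    (h : Fin p → ℝ) (hh : η ≤ vecNorm h)
    (hherm : ((M * Mᵀ)⁻¹).IsHermitian) (lamMinus lamPlus : ℝ)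
    (hlam : ∀ i, lamMinus ≤ hherm.eigenvalues i ∧ hherm.eigenvalues i ≤ lamPlus) :
    let v : Fin m → ℝ := Mᵀ *ᵥ ((J⁻¹)ᵀ *ᵥ h)
    let w : Fin m → ℝ := Mᵀ *ᵥ h
    vecNorm (M *ᵥ v) ^ 2 * (lamMinus - γ * lamPlus) ≤ v ⬝ᵥ w ∧
    (0 < lamMinus - γ * lamPlus →
      (γ * η / (β * (1 + γ))) ^ 2 * (lamMinus - γ * lamPlus) ≤ v ⬝ᵥ w ∧
      0 < (γ * η / (β * (1 + γ))) ^ 2 * (lamMinus - γ * lamPlus)) := by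
  intro v w
  have hv : v = Mᵀ *ᵥ ((J⁻¹)ᵀ *ᵥ h) := rfl
  have hw : w = Mᵀ *ᵥ h := rfl
  -- p = 0 is impossible
  rcases Nat.eq_zero_or_pos p with hp | hp
  · exfalso
    have : vecNorm h = 0 := by
      subst hp
      unfold vecNorm dotProduct
      simp
    linarith
  haveI : Nonempty (Fin p) := ⟨⟨0, hp⟩⟩
  have hMT : Mᴴ = Mᵀ := Matrix.conjTranspose_eq_transpose_of_trivial M
  -- `A := M * Mᵀ` is invertible and positive definite
  have hrankA : (M * Mᵀ).rank = p := by
    rw [← hMT, Matrix.rank_self_mul_conjTranspose]; exact hrank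
  have hsurj : Function.Surjective (M * Mᵀ).mulVecLin := by
    rw [← LinearMap.range_eq_top]
    apply Submodule.eq_top_of_finrank_eq
    rw [Module.finrank_fin_fun]
    exact hrankA
  have hinj : Function.Injective ((M * Mᵀ).mulVec) :=
    (LinearMap.injective_iff_surjective (f := (M * Mᵀ).mulVecLin)).mpr hsurj
  have hUA : IsUnit (M * Mᵀ) := Matrix.mulVec_injective_iff_isUnit.mp hinj
  have hPD : (M * Mᵀ).PosDef := by
    refine Matrix.PosDef.of_dotProduct_mulVec_pos ?_ ?_
    · rw [← hMT]; exact Matrix.isHermitian_mul_conjTranspose_self M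
    · intro x hx
      have hMx : Mᵀ *ᵥ x ≠ 0 := by
        intro h0
        apply hx
        apply hinj
        rw [← Matrix.mulVec_mulVec, h0, Matrix.mulVec_zero, Matrix.mulVec_zero]
      have heq : x ⬝ᵥ ((M * Mᵀ) *ᵥ x) = (Mᵀ *ᵥ x) ⬝ᵥ (Mᵀ *ᵥ x) := by
        rw [← Matrix.mulVec_mulVec, Matrix.dotProduct_mulVec, ← Matrix.mulVec_transpose]
      have hpos : 0 < x ⬝ᵥ ((M * Mᵀ) *ᵥ x) := by
        rw [heq]; exact dot_self_pos hMx
      simpa using hpos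
  have hdetA : IsUnit (M * Mᵀ).det := (Matrix.isUnit_iff_isUnit_det _).mp hUA
  have hPDB : ((M * Mᵀ)⁻¹).PosDef := hPD.inv
  have heigpos : ∀ i, 0 < hherm.eigenvalues i := fun i => hPDB.eigenvalues_pos i
  have hlamPlus : 0 < lamPlus :=
    lt_of_lt_of_le (heigpos (Classical.arbitrary _)) (hlam _).2
  have hγβ : (0:ℝ) < γ / β := div_pos hγ0 hβ
  have h1γ' : (0:ℝ) < 1 + γ := by linarith
  have hbpos : (0:ℝ) < γ * η / (β * (1 + γ)) :=
    div_pos (mul_pos hγ0 hη) (mul_pos hβ h1γ')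
  -- J is invertible
  have hdetJ : IsUnit J.det := by
    rw [isUnit_iff_ne_zero]
    intro h0
    obtain ⟨x, hx0, hx⟩ := (Matrix.exists_mulVec_eq_zero_iff).mpr h0
    have hxd : x = DS *ᵥ x := by
      rw [hJ, Matrix.sub_mulVec, Matrix.one_mulVec, sub_eq_zero] at hx
      exact hx
    have h1 : vecNorm x ≤ γ * vecNorm x := by
      calc vecNorm x = vecNorm (DS *ᵥ x) := by rw [← hxd]
      _ ≤ matOpNorm DS * vecNorm x := opNorm_bound _ _
      _ ≤ γ * vecNorm x := mul_le_mul_of_nonneg_right hDS (vecNorm_nonneg _)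
    have h2 : 0 < vecNorm x := vecNorm_pos hx0
    nlinarith
  set u : Fin p → ℝ := (J⁻¹)ᵀ *ᵥ h with hudef
  have hJu : Jᵀ *ᵥ u = h := by
    rw [hudef, Matrix.mulVec_mulVec, ← Matrix.transpose_mul,
      Matrix.nonsing_inv_mul J hdetJ, Matrix.transpose_one, Matrix.one_mulVec]
  set z : Fin p → ℝ := (M * Mᵀ) *ᵥ u with hzdef
  have hMv : M *ᵥ v = z := by
    rw [hv, Matrix.mulVec_mulVec]
  have hBz : (M * Mᵀ)⁻¹ *ᵥ z = u := by
    rw [hzdef, Matrix.mulVec_mulVec, Matrix.nonsing_inv_mul _ hdetA, Matrix.one_mulVec]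
  have hAT : (M * Mᵀ)ᵀ = M * Mᵀ := by
    rw [Matrix.transpose_mul, Matrix.transpose_transpose]
  -- the key identity
  have hvw : v ⬝ᵥ w = z ⬝ᵥ ((M * Mᵀ)⁻¹ *ᵥ z) - (DS *ᵥ z) ⬝ᵥ u := by
    rw [hv, hw, mulVecT_dot, Matrix.transpose_transpose, Matrix.mulVec_mulVec]
    have hJT : Jᵀ *ᵥ u = u - DSᵀ *ᵥ u := by
      rw [hJ, Matrix.transpose_sub, Matrix.transpose_one, Matrix.sub_mulVec,
        Matrix.one_mulVec]
    have hh' : h = u - DSᵀ *ᵥ u := by rw [← hJu, hJT]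
    rw [hh', Matrix.mulVec_sub, dotProduct_sub]
    congr 1
    · rw [hBz, ← hzdef, dotProduct_comm]
    · rw [mulVecT_dot DS z u]
      have := mulVecT_dot ((M * Mᵀ)ᵀ) u (DSᵀ *ᵥ u)
      rw [Matrix.transpose_transpose, hAT] at this
      rw [← this, ← hzdef]
  -- inequality 1
  have hI1 : lamMinus * (z ⬝ᵥ z) ≤ z ⬝ᵥ ((M * Mᵀ)⁻¹ *ᵥ z) :=
    quad_lower hherm lamMinus (fun i => (hlam i).1) z
  have hNu : vecNorm u ≤ lamPlus * vecNorm z := by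
    have h3 : ((M * Mᵀ)⁻¹ *ᵥ z) ⬝ᵥ ((M * Mᵀ)⁻¹ *ᵥ z) ≤ lamPlus ^ 2 * (z ⬝ᵥ z) := by
      refine normsq_upper hherm lamPlus (fun i => ?_) z
      rw [abs_of_pos (heigpos i)]; exact (hlam i).2
    rw [hBz] at h3
    unfold vecNorm
    calc Real.sqrt (u ⬝ᵥ u) ≤ Real.sqrt (lamPlus ^ 2 * (z ⬝ᵥ z)) := Real.sqrt_le_sqrt h3
    _ = lamPlus * Real.sqrt (z ⬝ᵥ z) := by
        rw [Real.sqrt_mul (sq_nonneg _), Real.sqrt_sq hlamPlus.le]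
  have hcross : (DS *ᵥ z) ⬝ᵥ u ≤ γ * lamPlus * vecNorm z ^ 2 := by
    calc (DS *ᵥ z) ⬝ᵥ u ≤ vecNorm (DS *ᵥ z) * vecNorm u := dot_le_norm _ _
    _ ≤ (γ * vecNorm z) * (lamPlus * vecNorm z) := by
        refine mul_le_mul ?_ hNu (vecNorm_nonneg _) (mul_nonneg hγ0.le (vecNorm_nonneg _))
        calc vecNorm (DS *ᵥ z) ≤ matOpNorm DS * vecNorm z := opNorm_bound _ _
        _ ≤ γ * vecNorm z := mul_le_mul_of_nonneg_right hDS (vecNorm_nonneg _)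
    _ = γ * lamPlus * vecNorm z ^ 2 := by ring
  have hmain : vecNorm z ^ 2 * (lamMinus - γ * lamPlus) ≤ v ⬝ᵥ w := by
    rw [hvw, vecNorm_sq]
    rw [vecNorm_sq] at hcross
    nlinarith [hI1, hcross]
  refine ⟨by rw [hMv]; exact hmain, fun hc => ?_⟩
  -- lower bound on ‖z‖
  have heigA : ∀ i, γ / β ≤ (Matrix.isHermitian_mul_conjTranspose_self M).eigenvalues i := by
    intro i
    have h0 : 0 ≤ (Matrix.isHermitian_mul_conjTranspose_self M).eigenvalues i :=
      Matrix.eigenvalues_self_mul_conjTranspose_nonneg M i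
    have h1 : Real.sqrt (γ / β) ≤
        Real.sqrt ((Matrix.isHermitian_mul_conjTranspose_self M).eigenvalues i) := by
      refine le_trans hσmin ?_
      unfold sigmaMin
      exact Real.sqrt_le_sqrt (ciInf_le (Set.Finite.bddBelow (Set.finite_range _)) i)
    calc γ / β = Real.sqrt (γ / β) ^ 2 := (Real.sq_sqrt hγβ.le).symm
    _ ≤ Real.sqrt ((Matrix.isHermitian_mul_conjTranspose_self M).eigenvalues i) ^ 2 :=
        pow_le_pow_left₀ (Real.sqrt_nonneg _) h1 2
    _ = _ := Real.sq_sqrt h0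
  have hNz2 : (γ / β) ^ 2 * (u ⬝ᵥ u) ≤ z ⬝ᵥ z := by
    have := normsq_lower (Matrix.isHermitian_mul_conjTranspose_self M) (γ / β)
      hγβ.le heigA u
    rw [hMT] at this
    rw [hzdef]
    exact this
  have hNz : (γ / β) * vecNorm u ≤ vecNorm z := by
    have h1 : Real.sqrt ((γ / β) ^ 2 * (u ⬝ᵥ u)) ≤ Real.sqrt (z ⬝ᵥ z) :=
      Real.sqrt_le_sqrt hNz2
    have h2 : Real.sqrt ((γ / β) ^ 2 * (u ⬝ᵥ u)) = (γ / β) * Real.sqrt (u ⬝ᵥ u) := by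
      rw [Real.sqrt_mul (sq_nonneg _), Real.sqrt_sq hγβ.le]
    unfold vecNorm
    rw [← h2]
    exact h1
  have hNu2 : η ≤ (1 + γ) * vecNorm u := by
    have hdoth : h ⬝ᵥ h = (J *ᵥ h) ⬝ᵥ u := by
      rw [mulVecT_dot J h u, hJu]
    have hJh : vecNorm (J *ᵥ h) ≤ (1 + γ) * vecNorm h := by
      rw [hJ, Matrix.sub_mulVec, Matrix.one_mulVec]
      calc vecNorm (h - DS *ᵥ h) ≤ vecNorm h + vecNorm (DS *ᵥ h) := vecNorm_sub_le _ _
      _ ≤ vecNorm h + γ * vecNorm h := by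
          have := (opNorm_bound DS h).trans
            (mul_le_mul_of_nonneg_right hDS (vecNorm_nonneg _))
          linarith
      _ = (1 + γ) * vecNorm h := by ring
    have hh2 : vecNorm h ^ 2 ≤ ((1 + γ) * vecNorm h) * vecNorm u := by
      rw [vecNorm_sq, hdoth]
      calc (J *ᵥ h) ⬝ᵥ u ≤ vecNorm (J *ᵥ h) * vecNorm u := dot_le_norm _ _
      _ ≤ ((1 + γ) * vecNorm h) * vecNorm u :=
          mul_le_mul_of_nonneg_right hJh (vecNorm_nonneg _)
    have hNh : 0 < vecNorm h := lt_of_lt_of_le hη hh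
    have : vecNorm h ≤ (1 + γ) * vecNorm u := by nlinarith [vecNorm_nonneg u]
    linarith
  have hbound : γ * η / (β * (1 + γ)) ≤ vecNorm z := by
    calc γ * η / (β * (1 + γ)) = (γ / β) * (η / (1 + γ)) := (div_mul_div_comm γ β η (1 + γ)).symm
    _ ≤ (γ / β) * vecNorm u := by
        refine mul_le_mul_of_nonneg_left ?_ hγβ.le
        rw [div_le_iff₀ h1γ']
        linarith [hNu2]
    _ ≤ vecNorm z := hNz
  have hb2 : (γ * η / (β * (1 + γ))) ^ 2 ≤ vecNorm z ^ 2 :=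
    pow_le_pow_left₀ hbpos.le hbound 2
  refine ⟨?_, ?_⟩
  · have := mul_le_mul_of_nonneg_right hb2 hc.le
    linarith [hmain]
  · exact mul_pos (pow_pos hbpos 2) hc
end
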